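/- arXiv:1904.07970 — 8 statements merged into one kernel-verified Lean document; each statement's English description precedes it below -/
import Mathlib

section
/- Let 0 < B < D_h ≤ 2B and let u(t), u(t−1) be independent, each uniformly distributed on [0, D_h]. Then E[ ( u(t) − B − (B − u(t−1))⁺ )⁺ ] = 2(D_h − B)³ / (3 D_h²). -/
open intervalIntegral in
lemma inner_int (Dh c : ℝ) (hD : 0 ≤ Dh) (hc : 0 ≤ c) :
    (∫ u in (0:ℝ)..Dh, max (u - c) 0) = (max (Dh - c) 0) ^ 2 / 2 := by
  rcases le_or_gt Dh c with h | h
  · have h0 : max (Dh - c) 0 = 0 := max_eq_right (by linarith)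
    rw [h0]
    have : Set.EqOn (fun u : ℝ => max (u - c) 0) (fun _ => (0:ℝ)) (Set.uIcc 0 Dh) := by
      intro u hu
      rw [Set.uIcc_of_le hD] at hu
      simp only
      exact max_eq_right (by linarith [hu.2])
    rw [intervalIntegral.integral_congr this]
    simp
  · have h0 : max (Dh - c) 0 = Dh - c := max_eq_left (by linarith)
    rw [h0]
    have hint1 : IntervalIntegrable (fun u : ℝ => max (u - c) 0) MeasureTheory.volume 0 c :=
      ((continuous_id.sub continuous_const).max continuous_const).intervalIntegrable _ _
    have hint2 : IntervalIntegrable (fun u : ℝ => max (u - c) 0) MeasureTheory.volume c Dh :=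
      ((continuous_id.sub continuous_const).max continuous_const).intervalIntegrable _ _
    rw [← intervalIntegral.integral_add_adjacent_intervals hint1 hint2]
    have e1 : (∫ u in (0:ℝ)..c, max (u - c) 0) = 0 := by
      have : Set.EqOn (fun u : ℝ => max (u - c) 0) (fun _ => (0:ℝ)) (Set.uIcc 0 c) := by
        intro u hu
        rw [Set.uIcc_of_le hc] at hu
        exact max_eq_right (by linarith [hu.2])
      rw [intervalIntegral.integral_congr this]; simp
    have e2 : (∫ u in c..Dh, max (u - c) 0) = (Dh - c) ^ 2 / 2 := by
      have : Set.EqOn (fun u : ℝ => max (u - c) 0) (fun u => u - c) (Set.uIcc c Dh) := by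
        intro u hu
        rw [Set.uIcc_of_le h.le] at hu
        exact max_eq_left (by linarith [hu.1])
      rw [intervalIntegral.integral_congr this]
      rw [intervalIntegral.integral_sub intervalIntegral.intervalIntegrable_id
        intervalIntegrable_const, integral_id,
        intervalIntegral.integral_const, smul_eq_mul]
      ring
    rw [e1, e2]; ring

/-- Expected overage under the rollover data plan when B < D_h ≤ 2B, with this
month's and last month's usages independent uniform on [0, D_h]. -/
theorem expected_overage_rollover (B Dh : ℝ) (hB : 0 < B) (hBD : B < Dh) (hD2B : Dh ≤ 2 * B) :
    (∫ v in (0:ℝ)..Dh, ∫ u in (0:ℝ)..Dh,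
        max (u - B - max (B - v) 0) 0 * (1 / Dh) * (1 / Dh))
      = 2 * (Dh - B) ^ 3 / (3 * Dh ^ 2) := by
  have hD : (0:ℝ) ≤ Dh := by linarith
  have hDne : Dh ≠ 0 := by linarith
  have h1 : ∀ v : ℝ, (∫ u in (0:ℝ)..Dh,
      max (u - B - max (B - v) 0) 0 * (1 / Dh) * (1 / Dh))
      = (max (Dh - (B + max (B - v) 0)) 0) ^ 2 / 2 * (1 / Dh) * (1 / Dh) := by
    intro v
    rw [intervalIntegral.integral_mul_const, intervalIntegral.integral_mul_const]
    congr 2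
    have : (fun u : ℝ => max (u - B - max (B - v) 0) 0)
        = fun u : ℝ => max (u - (B + max (B - v) 0)) 0 := by
      funext u; rw [sub_sub]
    rw [this]
    exact inner_int Dh _ hD (by positivity)
  simp only [h1]
  rw [intervalIntegral.integral_mul_const, intervalIntegral.integral_mul_const]
  have hF : Continuous fun v : ℝ => (max (Dh - (B + max (B - v) 0)) 0) ^ 2 / 2 := by
    fun_prop
  have hsplit1 : IntervalIntegrable (fun v : ℝ => (max (Dh - (B + max (B - v) 0)) 0) ^ 2 / 2)
      MeasureTheory.volume 0 (2 * B - Dh) := hF.intervalIntegrable _ _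
  have hsplit2 : IntervalIntegrable (fun v : ℝ => (max (Dh - (B + max (B - v) 0)) 0) ^ 2 / 2)
      MeasureTheory.volume (2 * B - Dh) B := hF.intervalIntegrable _ _
  have hsplit3 : IntervalIntegrable (fun v : ℝ => (max (Dh - (B + max (B - v) 0)) 0) ^ 2 / 2)
      MeasureTheory.volume B Dh := hF.intervalIntegrable _ _
  rw [← intervalIntegral.integral_add_adjacent_intervals (hsplit1.trans hsplit2) hsplit3,
      ← intervalIntegral.integral_add_adjacent_intervals hsplit1 hsplit2]
  have hle1 : (0:ℝ) ≤ 2 * B - Dh := by linarith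
  have hle2 : 2 * B - Dh ≤ B := by linarith
  have e1 : (∫ v in (0:ℝ)..(2 * B - Dh), (max (Dh - (B + max (B - v) 0)) 0) ^ 2 / 2) = 0 := by
    have : Set.EqOn (fun v : ℝ => (max (Dh - (B + max (B - v) 0)) 0) ^ 2 / 2)
        (fun _ => (0:ℝ)) (Set.uIcc 0 (2 * B - Dh)) := by
      intro v hv
      rw [Set.uIcc_of_le hle1] at hv
      have hm : max (B - v) 0 = B - v := max_eq_left (by linarith [hv.2])
      simp only [hm]
      rw [max_eq_right (by linarith [hv.2])]
      norm_num
    rw [intervalIntegral.integral_congr this]; simp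
  have e2 : (∫ v in (2 * B - Dh)..B, (max (Dh - (B + max (B - v) 0)) 0) ^ 2 / 2)
      = (Dh - B) ^ 3 / 6 := by
    have : Set.EqOn (fun v : ℝ => (max (Dh - (B + max (B - v) 0)) 0) ^ 2 / 2)
        (fun v => (v - (2 * B - Dh)) ^ 2 / 2) (Set.uIcc (2 * B - Dh) B) := by
      intro v hv
      rw [Set.uIcc_of_le hle2] at hv
      have hm : max (B - v) 0 = B - v := max_eq_left (by linarith [hv.2])
      simp only [hm]
      rw [max_eq_left (by linarith [hv.1])]
      ring_nf
    rw [intervalIntegral.integral_congr this]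
    have := intervalIntegral.integral_comp_sub_right
      (f := fun x : ℝ => x ^ 2 / 2) (a := 2 * B - Dh) (b := B) (2 * B - Dh)
    rw [this]
    rw [intervalIntegral.integral_div, integral_pow]
    have : B - (2 * B - Dh) = Dh - B := by ring
    rw [this]
    have : (2 * B - Dh) - (2 * B - Dh) = (0:ℝ) := by ring
    rw [this]
    norm_num
    ring
  have e3 : (∫ v in B..Dh, (max (Dh - (B + max (B - v) 0)) 0) ^ 2 / 2)
      = (Dh - B) * ((Dh - B) ^ 2 / 2) := by
    have : Set.EqOn (fun v : ℝ => (max (Dh - (B + max (B - v) 0)) 0) ^ 2 / 2)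
        (fun _ => (Dh - B) ^ 2 / 2) (Set.uIcc B Dh) := by
      intro v hv
      rw [Set.uIcc_of_le hBD.le] at hv
      have hm : max (B - v) 0 = 0 := max_eq_right (by linarith [hv.1])
      simp only [hm, add_zero]
      rw [max_eq_left (by linarith)]
    rw [intervalIntegral.integral_congr this, intervalIntegral.integral_const, smul_eq_mul]
  rw [e1, e2, e3]
  field_simp
  ring
end

section
/- Let 0 < B < D_h ≤ 2B. Then 2(D_h − B)³/(3 D_h²) < (D_h − B)²/(2 D_h); that is, the heavy user's expected overage under the rollover data plan is strictly smaller than under the traditional plan. -/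
/-- For B < D_h ≤ 2B the rollover expected overage is strictly smaller than the
traditional expected overage. -/
theorem rollover_reduces_overage (B Dh : ℝ) (hB : 0 < B) (hBD : B < Dh) (hD2B : Dh ≤ 2 * B) :
    2 * (Dh - B) ^ 3 / (3 * Dh ^ 2) < (Dh - B) ^ 2 / (2 * Dh) := by
  have hD : 0 < Dh := hB.trans hBD
  rw [div_lt_div_iff₀ (by positivity) (by positivity)]
  nlinarith [mul_pos (mul_pos (mul_pos (sub_pos.2 hBD) (sub_pos.2 hBD)) hD) (by linarith : (0:ℝ) < 4 * B - Dh)]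
end

section
/- Let D_h > 2B > 0. Then 2(D_h − B)³/(3 D_h²) − (D_h − 2B)³/(6 D_h²) < (D_h − B)²/(2 D_h); that is, even in the D_h > 2B regime the rollover plan strictly reduces a heavy user's expected overage. -/
/-- For D_h > 2B the rollover expected overage is still strictly smaller than the
traditional expected overage. -/
theorem rollover_reduces_overage_large (B Dh : ℝ) (hB : 0 < B) (hD2B : 2 * B < Dh) :
    2 * (Dh - B) ^ 3 / (3 * Dh ^ 2) - (Dh - 2 * B) ^ 3 / (6 * Dh ^ 2)
      < (Dh - B) ^ 2 / (2 * Dh) := by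
  have hD : 0 < Dh := by linarith
  rw [div_sub_div _ _ (by positivity) (by positivity),
    div_lt_div_iff₀ (by positivity) (by positivity)]
  nlinarith [mul_pos (mul_pos (by linarith : (0:ℝ) < 3 * Dh - 4 * B) (pow_pos hD 2))
    (mul_pos hB hB)]
end

section
/- Let D_l ≤ D_h ≤ 2B ≤ D_l + D_h with D_l, D_h, B > 0, and let u = u_1 + u_2 with u_1, u_2 independent uniform on [0, D_l] and [0, D_h]. Then E[(u − 2B)⁺] = (D_h + D_l − 2B)³ / (6 D_h D_l). -/
lemma cont_max (c : ℝ) : Continuous (fun y : ℝ => max (y - c) 0) :=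
  (continuous_id.sub continuous_const).max continuous_const

lemma intA (T c : ℝ) (hT : 0 ≤ T) (hc : 0 ≤ c) :
    ∫ y in (0:ℝ)..T, max (y - c) 0 = (max (T - c) 0) ^ 2 / 2 := by
  by_cases hcT : c ≤ T
  · have hsplit := intervalIntegral.integral_add_adjacent_intervals
      (μ := MeasureTheory.volume) (a := (0:ℝ)) (b := c) (c := T) (f := fun y => max (y - c) 0)
      ((cont_max c).intervalIntegrable _ _) ((cont_max c).intervalIntegrable _ _)
    have h1 : ∫ y in (0:ℝ)..c, max (y - c) 0 = 0 := by
      rw [intervalIntegral.integral_congr (g := fun _ => (0:ℝ))]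
      · simp
      · intro y hy
        rw [Set.uIcc_of_le hc] at hy
        simp only
        exact max_eq_right (by linarith [hy.2])
    have h2 : ∫ y in c..T, max (y - c) 0 = (T - c) ^ 2 / 2 := by
      rw [intervalIntegral.integral_congr (g := fun y => y - c)]
      · rw [intervalIntegral.integral_comp_sub_right (fun y => y) c]
        rw [integral_id]
        ring
      · intro y hy
        rw [Set.uIcc_of_le hcT] at hy
        exact max_eq_left (by linarith [hy.1])
    rw [← hsplit, h1, h2, max_eq_left (by linarith)]
    ring
  · push_neg at hcT
    rw [intervalIntegral.integral_congr (g := fun _ => (0:ℝ))]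
    · rw [max_eq_right (by linarith)]
      simp
    · intro y hy
      rw [Set.uIcc_of_le hT] at hy
      exact max_eq_right (by linarith [hy.2])

lemma intB (T c : ℝ) (hc : 0 ≤ c) (hcT : c ≤ T) :
    ∫ x in (0:ℝ)..T, (max (x - c) 0) ^ 2 = (T - c) ^ 3 / 3 := by
  have hsplit := intervalIntegral.integral_add_adjacent_intervals
    (μ := MeasureTheory.volume) (a := (0:ℝ)) (b := c) (c := T) (f := fun x => (max (x - c) 0) ^ 2)
    (((cont_max c).pow 2).intervalIntegrable _ _) (((cont_max c).pow 2).intervalIntegrable _ _)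
  have h1 : ∫ x in (0:ℝ)..c, (max (x - c) 0) ^ 2 = 0 := by
    rw [intervalIntegral.integral_congr (g := fun _ => (0:ℝ))]
    · simp
    · intro y hy
      rw [Set.uIcc_of_le hc] at hy
      simp only
      rw [max_eq_right (by linarith [hy.2])]
      simp
  have h2 : ∫ x in c..T, (max (x - c) 0) ^ 2 = (T - c) ^ 3 / 3 := by
    rw [intervalIntegral.integral_congr (g := fun x => (x - c) ^ 2)]
    · rw [intervalIntegral.integral_comp_sub_right (fun x => x ^ 2) c]
      rw [integral_pow]
      norm_num
    · intro y hy
      rw [Set.uIcc_of_le hcT] at hy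
      simp only
      rw [max_eq_left (by linarith [hy.1])]
  rw [← hsplit, h1, h2, zero_add]

/-- Expected overage of a (heavy, light) family sharing quota 2B, with usages
independent uniform on [0, D_l] and [0, D_h], when D_l ≤ D_h ≤ 2B ≤ D_l + D_h. -/
theorem expected_overage_shared_hl (B Dl Dh : ℝ) (hB : 0 < B) (hDl : 0 < Dl) (hDh : 0 < Dh)
    (h1 : Dl ≤ Dh) (h2 : Dh ≤ 2 * B) (h3 : 2 * B ≤ Dl + Dh) :
    (∫ x in (0:ℝ)..Dl, ∫ y in (0:ℝ)..Dh,
        max (x + y - 2 * B) 0 * (1 / Dl) * (1 / Dh))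
      = (Dh + Dl - 2 * B) ^ 3 / (6 * Dh * Dl) := by
  have key : ∀ x ∈ Set.uIcc (0:ℝ) Dl,
      (∫ y in (0:ℝ)..Dh, max (x + y - 2 * B) 0 * (1 / Dl) * (1 / Dh))
        = (max (x - (2 * B - Dh)) 0) ^ 2 / 2 * (1 / Dl) * (1 / Dh) := by
    intro x hx
    rw [Set.uIcc_of_le hDl.le] at hx
    have e1 : (∫ y in (0:ℝ)..Dh, max (x + y - 2 * B) 0 * (1 / Dl) * (1 / Dh))
        = (∫ y in (0:ℝ)..Dh, max (y - (2 * B - x)) 0) * (1 / Dl) * (1 / Dh) := by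
      rw [intervalIntegral.integral_mul_const, intervalIntegral.integral_mul_const]
      congr 2
      apply intervalIntegral.integral_congr
      intro y _
      simp only
      congr 1
      ring
    rw [e1, intA Dh (2 * B - x) hDh.le (by linarith [hx.2])]
    congr 2
    rw [show Dh - (2 * B - x) = x - (2 * B - Dh) by ring]
  rw [intervalIntegral.integral_congr key]
  rw [intervalIntegral.integral_mul_const, intervalIntegral.integral_mul_const,
      intervalIntegral.integral_div, intB Dl (2 * B - Dh) (by linarith) (by linarith)]
  field_simp
  ring
end

section
/- Let λ > λ₀ > 0, S > 0, α, N_i, N₀ > 0 and positive constants C, C^r. If 2N_i(C − C^r(λ+S)/S) ≤ N₀ C^r λ₀/S (i.e., κ_i ≤ 1), then for all T_i ≥ T_j ≥ 0, the derivative 2αN_i(C − C^r(λ+S)/S) e^{λT_j − (λ+S)T_i} − αN₀ C^r (λ₀/S) e^{λ₀T_j − (λ₀+S)T_i} is nonpositive. -/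
/-- If κ_i ≤ 1, the derivative of the late-upgrade profit is nonpositive for all
T_i ≥ T_j ≥ 0: WSP i never benefits from delaying its rollover. -/
theorem late_rollover_derivative_nonpos (lam lam0 S α Ni N0 C Cr : ℝ)
    (hll : lam0 < lam) (hl0 : 0 < lam0) (hS : 0 < S) (hα : 0 < α)
    (hNi : 0 < Ni) (hN0 : 0 < N0) (hC : 0 < C) (hCr : 0 < Cr)
    (hκ : 2 * Ni * (C - Cr * (lam + S) / S) ≤ N0 * Cr * lam0 / S) :
    ∀ Ti Tj : ℝ, 0 ≤ Tj → Tj ≤ Ti →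
      2 * α * Ni * (C - Cr * (lam + S) / S) * Real.exp (lam * Tj - (lam + S) * Ti)
        - α * N0 * Cr * (lam0 / S) * Real.exp (lam0 * Tj - (lam0 + S) * Ti) ≤ 0 := by
  intro Ti Tj hTj hTT
  have hx : lam * Tj - (lam + S) * Ti ≤ lam0 * Tj - (lam0 + S) * Ti := by nlinarith
  have hE : Real.exp (lam * Tj - (lam + S) * Ti)
      ≤ Real.exp (lam0 * Tj - (lam0 + S) * Ti) := Real.exp_le_exp.mpr hx
  have h1 := Real.exp_pos (lam * Tj - (lam + S) * Ti)
  have h2 := Real.exp_pos (lam0 * Tj - (lam0 + S) * Ti)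
  set e1 := Real.exp (lam * Tj - (lam + S) * Ti)
  set e2 := Real.exp (lam0 * Tj - (lam0 + S) * Ti)
  have hB : 0 ≤ N0 * Cr * lam0 / S := by positivity
  have key : 2 * Ni * (C - Cr * (lam + S) / S) * e1 ≤ N0 * Cr * lam0 / S * e2 := by
    rcases le_or_gt (2 * Ni * (C - Cr * (lam + S) / S)) 0 with hAle | hApos
    · exact le_trans (mul_nonpos_of_nonpos_of_nonneg hAle h1.le) (mul_nonneg hB h2.le)
    · calc 2 * Ni * (C - Cr * (lam + S) / S) * e1
          ≤ 2 * Ni * (C - Cr * (lam + S) / S) * e2 :=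
            mul_le_mul_of_nonneg_left hE hApos.le
        _ ≤ N0 * Cr * lam0 / S * e2 := mul_le_mul_of_nonneg_right hκ h2.le
  have h := mul_le_mul_of_nonneg_left key hα.le
  ring_nf at h ⊢
  linarith
end

section
/- Let S, λ, λ₀ > 0 with λ > λ₀, let α, N, N₀ > 0, N_i + N_j = N with N_i, N_j > 0, C^r > 0, and κ_j > 1. Then the first-mover profit R̄_i^{r,≤} = 2αN C^r/S − 2αN_j C^r/(S+λ) − 2αN_j C^r (1/S − 1/(λ+S)) κ_j^{−(λ+S)/(λ−λ₀)} + 2αN₀(1/S − 1/(S+λ₀)) C^r − αN₀(1/S − 1/(S+λ₀)) κ_j^{−(λ₀+S)/(λ−λ₀)} C^r is strictly greater than the simultaneous-upgrade profit R̄_i^r = 2αN_i C^r/S + αN₀(1/S − 1/(S+λ₀)) C^r. -/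
/-- The sole-first-mover equilibrium rollover profit strictly exceeds the
simultaneous-upgrade profit. -/
theorem first_mover_beats_simultaneous (S lam lam0 α N N0 Ni Nj Cr κj : ℝ)
    (hS : 0 < S) (hll : lam0 < lam) (hl0 : 0 < lam0) (hα : 0 < α)
    (hN : 0 < N) (hN0 : 0 < N0) (hNi : 0 < Ni) (hNj : 0 < Nj)
    (hsum : Ni + Nj = N) (hCr : 0 < Cr) (hκ : 1 < κj) :
    2 * α * Ni * Cr / S + α * N0 * (1 / S - 1 / (S + lam0)) * Cr
      < 2 * α * N * Cr / S - 2 * α * Nj * Cr / (S + lam)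
        - 2 * α * Nj * Cr * (1 / S - 1 / (lam + S)) * κj ^ (-(lam + S) / (lam - lam0))
        + 2 * α * N0 * (1 / S - 1 / (S + lam0)) * Cr
        - α * N0 * (1 / S - 1 / (S + lam0)) * κj ^ (-(lam0 + S) / (lam - lam0)) * Cr := by
  have hd : 0 < lam - lam0 := by linarith
  have hp1 : κj ^ (-(lam + S) / (lam - lam0)) < 1 :=
    Real.rpow_lt_one_of_one_lt_of_neg hκ
      (div_neg_of_neg_of_pos (by linarith) hd)
  have hp2 : κj ^ (-(lam0 + S) / (lam - lam0)) < 1 :=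
    Real.rpow_lt_one_of_one_lt_of_neg hκ
      (div_neg_of_neg_of_pos (by linarith) hd)
  have hp1' : (0:ℝ) < κj ^ (-(lam + S) / (lam - lam0)) :=
    Real.rpow_pos_of_pos (by linarith) _
  have hp2' : (0:ℝ) < κj ^ (-(lam0 + S) / (lam - lam0)) :=
    Real.rpow_pos_of_pos (by linarith) _
  set p := κj ^ (-(lam + S) / (lam - lam0))
  set q := κj ^ (-(lam0 + S) / (lam - lam0))
  have h1 : 0 < 1 / S - 1 / (lam + S) :=
    sub_pos.mpr (one_div_lt_one_div_of_lt hS (by linarith))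
  have h2 : 0 < 1 / S - 1 / (S + lam0) :=
    sub_pos.mpr (one_div_lt_one_div_of_lt hS (by linarith))
  have key : 2 * α * N * Cr / S - 2 * α * Nj * Cr / (S + lam)
      = 2 * α * Ni * Cr / S + 2 * α * Nj * Cr * (1 / S - 1 / (lam + S)) := by
    subst hsum
    field_simp
    ring
  rw [key]
  have h0 : 0 < 2 * α * Nj * Cr := by positivity
  have e1 : 0 < 2 * α * Nj * Cr * (1 / S - 1 / (lam + S)) * (1 - p) :=
    mul_pos (mul_pos h0 h1) (by linarith)
  have e2 : 0 < α * N0 * (1 / S - 1 / (S + lam0)) * Cr * (1 - q) :=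
    mul_pos (mul_pos (mul_pos (mul_pos hα hN0) h2) hCr) (by linarith)
  nlinarith [e1, e2]
end

section
/- Let λ, S > 0 and positive reals EC_h, EC_l, EC_{h,l}, EC_{h,h}. If (EC_h + EC_l)/EC_{h,l} > (2λ+S)/S and 2·EC_h/EC_{h,h} > (2λ+S)/S, then for every α ∈ (0,1): 2S(EC_h + EC_l) − 2(2λ+S)EC_{h,l} > α·(2S·EC_l + (2λ+S)EC_{h,h} − 2(2λ+S)EC_{h,l}); that is, the condition D·S ≤ E·(2λ+S) fails for every α ∈ (0,1). -/
/-- Significant cost reduction for both family types: the condition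
D·S ≤ E·(2λ+S) fails for every α ∈ (0,1). -/
theorem significant_reduction_shared_plan (lam S ECh ECl EChl EChh : ℝ)
    (hlam : 0 < lam) (hS : 0 < S)
    (hECh : 0 < ECh) (hECl : 0 < ECl) (hEChl : 0 < EChl) (hEChh : 0 < EChh)
    (hhl : (2 * lam + S) / S < (ECh + ECl) / EChl)
    (hhh : (2 * lam + S) / S < 2 * ECh / EChh) :
    ∀ α ∈ Set.Ioo (0:ℝ) 1,
      α * (2 * S * ECl + (2 * lam + S) * EChh - 2 * (2 * lam + S) * EChl)
        < 2 * S * (ECh + ECl) - 2 * (2 * lam + S) * EChl := by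
  intro α hα
  obtain ⟨h0, h1⟩ := hα
  rw [div_lt_div_iff₀ hS hEChl] at hhl
  rw [div_lt_div_iff₀ hS hEChh] at hhh
  set X := 2 * S * ECl + (2 * lam + S) * EChh - 2 * (2 * lam + S) * EChl with hX
  have hC : X < 2 * S * (ECh + ECl) - 2 * (2 * lam + S) * EChl := by
    nlinarith
  rcases le_or_gt X 0 with h | h
  · nlinarith
  · nlinarith
end

section
/- Let λ > λ₀ > 0, S > 0, α > 0, N > 0, η₀ ∈ [0, 1), and C, C^r > 0 with C > C^r(λ+S)/S. Then the late-rollover profit with η_i = 1, R̄^{r,>} = 2αN·C/(λ+S)·(1 − κ^{−(λ+S)/(λ−λ₀)}) + 2αN·C^r/S·κ^{−(λ+S)/(λ−λ₀)} + α η₀ N (1/S − 1/(S+λ₀)) κ^{−(λ₀+S)/(λ−λ₀)} C^r, where κ = 2(C − C^r(λ+S)/S)/(η₀ C^r λ₀/S) > 1, is strictly less than the no-upgrade profit 2αN·C/S. -/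
/-- A WSP with full market share (η_i = 1) rolling over late at its optimal time
earns strictly less than it would by never upgrading, when η₀ < 1 and the
overage-charge reduction is nontrivial. -/
theorem late_rollover_loses (lam lam0 S α N η0 C Cr : ℝ)
    (hll : lam0 < lam) (hl0 : 0 < lam0) (hS : 0 < S) (hα : 0 < α) (hN : 0 < N)
    (hη0 : 0 ≤ η0) (hη0' : η0 < 1) (hC : 0 < C) (hCr : 0 < Cr)
    (hred : Cr * (lam + S) / S < C)
    (hκ : 1 < 2 * (C - Cr * (lam + S) / S) / (η0 * Cr * lam0 / S)) :
    2 * α * N * C / (lam + S)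
        * (1 - (2 * (C - Cr * (lam + S) / S) / (η0 * Cr * lam0 / S))
            ^ (-(lam + S) / (lam - lam0)))
      + 2 * α * N * Cr / S
        * (2 * (C - Cr * (lam + S) / S) / (η0 * Cr * lam0 / S))
            ^ (-(lam + S) / (lam - lam0))
      + α * η0 * N * (1 / S - 1 / (S + lam0))
        * (2 * (C - Cr * (lam + S) / S) / (η0 * Cr * lam0 / S))
            ^ (-(lam0 + S) / (lam - lam0)) * Cr
      < 2 * α * N * C / S := by
  set κ := 2 * (C - Cr * (lam + S) / S) / (η0 * Cr * lam0 / S) with hκdef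
  have hκ0 : (0:ℝ) < κ := lt_trans one_pos hκ
  have hlamS : 0 < lam + S := by linarith
  have hdiff : 0 < lam - lam0 := by linarith
  have hSl : 0 < S + lam0 := by linarith
  have hη0pos : 0 < η0 := by
    rcases lt_or_eq_of_le hη0 with h | h
    · exact h
    · exfalso
      rw [hκdef, ← h] at hκ0
      norm_num at hκ0
  have hden : (0:ℝ) < η0 * Cr * lam0 / S := by positivity
  have hkey : κ * (η0 * Cr * lam0 / S) = 2 * (C - Cr * (lam + S) / S) := by
    rw [hκdef]; field_simp
  have hkey2 : η0 * Cr * lam0 * κ = 2 * S * C - 2 * Cr * (lam + S) := by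
    field_simp at hkey; linarith
  have he1 : -(lam + S) / (lam - lam0) < 0 :=
    div_neg_of_neg_of_pos (by linarith) hdiff
  set x := κ ^ (-(lam + S) / (lam - lam0)) with hx
  have hx0 : 0 < x := Real.rpow_pos_of_pos hκ0 _
  have hx1 : x < 1 := Real.rpow_lt_one_of_one_lt_of_neg hκ he1
  have hy : κ ^ (-(lam0 + S) / (lam - lam0)) = κ * x := by
    have hne : lam - lam0 ≠ 0 := ne_of_gt hdiff
    have he : -(lam0 + S) / (lam - lam0) = 1 + -(lam + S) / (lam - lam0) := by
      field_simp; ring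
    rw [he, Real.rpow_add hκ0, Real.rpow_one, hx]
  rw [hy]
  have h1 : 2 * α * N * C / (lam + S) * (1 - x) < 2 * α * N * C / S * (1 - x) := by
    apply mul_lt_mul_of_pos_right _ (by linarith)
    exact div_lt_div_of_pos_left (by positivity) hS (by linarith)
  have h2 : 2 * α * N * Cr / S * x
      + α * η0 * N * (1 / S - 1 / (S + lam0)) * (κ * x) * Cr
      ≤ 2 * α * N * C / S * x := by
    have e : 2 * α * N * C / S * x - (2 * α * N * Cr / S * x
        + α * η0 * N * (1 / S - 1 / (S + lam0)) * (κ * x) * Cr)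
        = α * N * x / S * (2 * C - 2 * Cr - (η0 * Cr * lam0 * κ) / (S + lam0)) := by
      field_simp
      ring
    have hineq : 0 ≤ 2 * C - 2 * Cr - (η0 * Cr * lam0 * κ) / (S + lam0) := by
      rw [hkey2, sub_nonneg, div_le_iff₀ hSl]
      nlinarith [mul_pos hC hl0, mul_pos hCr hdiff]
    nlinarith [mul_nonneg (le_of_lt (by positivity : (0:ℝ) < α * N * x / S)) hineq]
  linarith
end
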